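/- Write r = q/p in lowest terms. If v is a nonempty cyclically reduced, cyclically alternating word in F which represents the trivial element of the 2-bridge link group G(K(r)) = ⟨a, b | u_r⟩ (the quotient of F by the normal closure of u_r), then the length of v satisfies |v| > |u_r|/2 = p. -/

import Mathlib

/- Formalization of statements from "Homotopically equivalent simple loops on
2-bridge spheres in Heckoid orbifolds for 2-bridge links (II)" by Lee-Sakuma.

We work in the free group `F` on two generators `a = gen 0`, `b = gen 1`.
For a rational `s` (in lowest terms `q/p`, with `0 ≤ s ≤ 1`), `uWord s` is the
word `u_s = a b^{ε₁} a^{ε₂} ⋯ b^{ε_{2p-1}}` with `ε_i = (-1)^⌊i·s⌋`.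
`CS s` is (a linear representative of) the cyclic sequence of lengths of
maximal constant-sign runs of exponents of `u_s`; since `u_s` begins with a
positive letter and (for `0 < s ≤ 1`) ends with a negative letter, the linear
run-length sequence represents the cyclic one.  `CyclicContains L T` says the
cyclic sequence represented by `L` contains `T` as a block of consecutive
terms.  `cfQ [m₁,…,m_k]` is the continued fraction `1/(m₁+1/(m₂+⋯+1/m_k))`.
`memI1 M n s` / `memI2 M n s` express `s ∈ I₁(r;n)` / `s ∈ I₂(r;n)` where
`r = cfQ M`, and `memI1hat` / `memI2hat` express `s ∈ I₁(r)` / `s ∈ I₂(r)`.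
The Heckoid group `Heck(r;n) = ⟨a,b | u_r^n⟩` is the quotient of `F` by the
normal closure `heckN r n` of `u_r^n`, with quotient map `heckQ r n`. -/

namespace Heckoid

abbrev F : Type := FreeGroup (Fin 2)

/-- The generators: `gen 0 = a`, `gen 1 = b` (and `gen i` depends on parity). -/
def gen (i : ℕ) : F := FreeGroup.of ⟨i % 2, Nat.mod_lt _ (by norm_num)⟩

/-- The word `u_s = a b^{ε₁} a^{ε₂} b^{ε₃} ⋯ a^{ε_{2p-2}} b^{ε_{2p-1}}`,
where `s = q/p` in lowest terms and `ε_i = (-1)^⌊iq/p⌋`. -/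
def uWord (s : ℚ) : F :=
  ((List.range (2 * s.den)).map
    (fun i => gen i ^ ((-1 : ℤ) ^ (⌊(i : ℚ) * s⌋.toNat)))).prod

/-- The sequence of exponent signs `ε₀, ε₁, …, ε_{2p-1}` of `u_s`. -/
def signList (s : ℚ) : List ℤ :=
  (List.range (2 * s.den)).map (fun i => (-1 : ℤ) ^ (⌊(i : ℚ) * s⌋.toNat))

/-- Lengths of the maximal runs of equal consecutive entries. -/
def runLengths {α : Type} [BEq α] (l : List α) : List ℕ :=
  (l.splitBy (· == ·)).map List.length

/-- `CS s = CS(u_s)`: the cyclic sequence of lengths of maximal constant-sign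
runs of `u_s`, represented by a list. -/
def CS (s : ℚ) : List ℕ := runLengths (signList s)

/-- The cyclic sequence represented by `L` contains `T` as a block of
consecutive terms. -/
def CyclicContains (L T : List ℕ) : Prop := ∃ k, T <+: L.rotate k

/-- The continued fraction `[m₁, m₂, …, m_k] = 1/(m₁+1/(m₂+⋯+1/m_k))`. -/
def cfQ : List ℕ → ℚ
  | [] => 0
  | a :: l => 1 / ((a : ℚ) + cfQ l)

/-- `d⟨T, T'⟩`: `d` consecutive repetitions of the concatenation of `T` and `T'`. -/
def rep2 (d : ℕ) (T T' : List ℕ) : List ℕ := (List.replicate d (T ++ T')).flatten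

/-- `s ∈ I₁(r;n)` where `r = cfQ M`:  `[0, [m₁,…,m_{k-1},m_k-1,2]]` for `k` even,
`[0, [m₁,…,m_k,2n-2])` for `k` odd. -/
def memI1 (M : List ℕ) (n : ℕ) (s : ℚ) : Prop :=
  if Even M.length then 0 ≤ s ∧ s ≤ cfQ (M.dropLast ++ [M.getLast! - 1, 2])
  else 0 ≤ s ∧ s < cfQ (M ++ [2 * n - 2])

/-- `s ∈ I₂(r;n)` where `r = cfQ M`: `([m₁,…,m_k,2n-2], 1]` for `k` even,
`[[m₁,…,m_{k-1},m_k-1,2], 1]` for `k` odd. -/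
def memI2 (M : List ℕ) (n : ℕ) (s : ℚ) : Prop :=
  if Even M.length then cfQ (M ++ [2 * n - 2]) < s ∧ s ≤ 1
  else cfQ (M.dropLast ++ [M.getLast! - 1, 2]) ≤ s ∧ s ≤ 1

/-- `s ∈ I₁(r)` where `r = cfQ M`. -/
def memI1hat (M : List ℕ) (s : ℚ) : Prop :=
  if Even M.length then 0 ≤ s ∧ s ≤ cfQ (M.dropLast ++ [M.getLast! - 1])
  else 0 ≤ s ∧ s ≤ cfQ M.dropLast

/-- `s ∈ I₂(r)` where `r = cfQ M`. -/
def memI2hat (M : List ℕ) (s : ℚ) : Prop :=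
  if Even M.length then cfQ M.dropLast ≤ s ∧ s ≤ 1
  else cfQ (M.dropLast ++ [M.getLast! - 1]) ≤ s ∧ s ≤ 1

/-- A word is cyclically alternating: reading cyclically, consecutive letters
involve different generators. -/
def CycAlternating (w : List (Fin 2 × Bool)) : Prop :=
  ∀ i : Fin w.length,
    (w.get i).1 ≠ (w.get ⟨(i.val + 1) % w.length, Nat.mod_lt _ i.pos⟩).1

/-- A word is cyclically reduced: all of its cyclic permutations are reduced. -/
def CycReduced (w : List (Fin 2 × Bool)) : Prop :=
  ∀ k, FreeGroup.reduce (w.rotate k) = w.rotate k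

open DihedralGroup

variable {p : ℕ}

lemma inv_sr (j : ZMod p) : (sr j)⁻¹ = sr j :=
  inv_eq_of_mul_eq_one_right (sr_mul_self j)

def eps (c : Fin 2) : ZMod p := if c = 0 then 1 else -1

def fD (p : ℕ) : Fin 2 → DihedralGroup p := fun c => sr ((c.val : ZMod p))

lemma prod_even : ∀ (l : ℕ) (w : List (Fin 2)) (c : Fin 2), w.Chain' (· ≠ ·) →
    w.length = 2 * l → (w = [] ∨ w.head? = some c) →
    (w.map (fD p)).prod = r ((eps c) * (l : ZMod p)) := by
  intro l
  induction l with
  | zero =>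
    intro w c _ hlen _
    have : w = [] := List.length_eq_zero_iff.mp (by omega)
    simp [this]
  | succ l ih =>
    intro w c hch hlen hhd
    match w with
    | [] => simp at hlen
    | [a] => simp at hlen; omega
    | a :: b :: t =>
      have hca : c = a := by
        rcases hhd with h | h
        · simp at h
        · simpa using h.symm
      rw [hca]
      obtain ⟨hab, hch2⟩ := List.isChain_cons_cons.mp hch
      obtain ⟨hbt, htch⟩ := List.isChain_cons.mp hch2
      have htl : t.length = 2 * l := by simp at hlen; omega
      have hthd : t = [] ∨ t.head? = some a := by
        cases t with
        | nil => exact Or.inl rfl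
        | cons d t' =>
          right
          have hbd : b ≠ d := hbt d rfl
          have : d = a := by fin_cases a <;> fin_cases b <;> fin_cases d <;> simp_all
          simp [this]
      have ht := ih t a htch htl hthd
      have key : ((b : Fin 2).val : ZMod p) - ((a : Fin 2).val : ZMod p) = eps a := by
        fin_cases a <;> fin_cases b <;> simp_all [eps]
      simp only [List.map_cons, List.prod_cons, fD, ← mul_assoc, sr_mul_sr, ht, r_mul_r]
      congr 1
      push_cast
      rw [key]
      ring

lemma prod_odd : ∀ (l : ℕ) (w : List (Fin 2)), w.Chain' (· ≠ ·) →
    w.length = 2 * l + 1 → ∃ j : ZMod p, (w.map (fD p)).prod = sr j := by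
  intro l w hch hlen
  match w with
  | [] => simp at hlen
  | a :: t =>
    obtain ⟨hat, htch⟩ := List.isChain_cons.mp hch
    have htl : t.length = 2 * l := by simp at hlen; omega
    have hthd : t = [] ∨ ∃ d, t.head? = some d := by
      cases t with
      | nil => exact Or.inl rfl
      | cons d t' => exact Or.inr ⟨d, rfl⟩
    have : ∃ c : Fin 2, t = [] ∨ t.head? = some c := by
      rcases hthd with h | ⟨d, h⟩
      · exact ⟨0, Or.inl h⟩
      · exact ⟨d, Or.inr h⟩
    obtain ⟨c, hc⟩ := this
    have ht := prod_even (p := p) l t c htch htl hc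
    refine ⟨(a.val : ZMod p) + eps c * (l : ZMod p), ?_⟩
    simp [fD, ht]

lemma range_prod (p : ℕ) : ∀ m : ℕ,
    ((List.range (2*m)).map (fun i => sr (((i % 2 : ℕ)) : ZMod p))).prod = r (m : ZMod p) := by
  intro m
  induction m with
  | zero => simp
  | succ m ih =>
    have h2 : 2 * (m+1) = (2*m + 1) + 1 := by ring
    have e0 : (2*m) % 2 = 0 := by omega
    have e1 : (2*m+1) % 2 = 1 := by omega
    rw [h2, List.range_succ, List.range_succ]
    simp only [List.map_append, List.prod_append, ih, List.map_cons, List.map_nil,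
      List.prod_cons, List.prod_nil, e0, e1]
    simp only [Nat.cast_zero, Nat.cast_one, mul_one, r_mul_sr, sr_mul_sr]
    congr 1
    push_cast
    ring

/-- If `v` is a nonempty cyclically reduced, cyclically alternating word
representing the trivial element of the 2-bridge link group
`G(K(r)) = ⟨a,b | u_r⟩`, then `|v| > |u_r|/2 = p`, where `r = q/p` is in
lowest terms. -/
theorem statement16
    (M : List ℕ) (m n : ℕ) (r : ℚ)
    (hMlen : 2 ≤ M.length) (hMpos : ∀ x ∈ M, 0 < x) (hMlast : 2 ≤ M.getLast!)
    (hm : M.head? = some m) (hn : 2 ≤ n) (hr : r = cfQ M)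
    (v : List (Fin 2 × Bool)) (hvne : v ≠ [])
    (hvred : CycReduced v) (hvalt : CycAlternating v)
    (hvtriv : FreeGroup.mk v ∈ Subgroup.normalClosure ({uWord r} : Set F)) :
    r.den < v.length := by
  classical
  have hp1 : 1 ≤ r.den := r.pos
  set p := r.den with hp
  set φ : F →* DihedralGroup p := FreeGroup.lift (fD p) with hφ
  have hgen : ∀ i : ℕ, φ (gen i) = sr (((i % 2 : ℕ)) : ZMod p) := by
    intro i
    rw [gen, hφ, FreeGroup.lift_apply_of]
    rfl
  have hu : φ (uWord r) = 1 := by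
    rw [uWord, map_list_prod, List.map_map]
    have hterm : ∀ i : ℕ,
        (φ ∘ fun i => gen i ^ ((-1 : ℤ) ^ (⌊(i : ℚ) * r⌋.toNat))) i
          = sr (((i % 2 : ℕ)) : ZMod p) := by
      intro i
      simp only [Function.comp_apply, map_zpow, hgen]
      rcases Nat.even_or_odd (⌊(i : ℚ) * r⌋.toNat) with h | h
      · rw [h.neg_one_pow, zpow_one]
      · rw [h.neg_one_pow, zpow_neg, zpow_one, inv_sr]
    rw [List.map_congr_left fun i _ => hterm i, range_prod p p,
      ZMod.natCast_self, ← one_def]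
  have hker : φ (FreeGroup.mk v) = 1 := by
    have hle : Subgroup.normalClosure ({uWord r} : Set F) ≤ φ.ker := by
      apply Subgroup.normalClosure_le_normal
      intro x hx
      rcases hx with rfl
      exact hu
    exact hle hvtriv
  set w : List (Fin 2) := v.map Prod.fst with hwdef
  have hwlen : w.length = v.length := List.length_map _
  have hprod : (w.map (fD p)).prod = 1 := by
    rw [hφ, FreeGroup.lift_mk] at hker
    rw [hwdef, List.map_map]
    rw [← hker]
    congr 1
    apply List.map_congr_left
    intro x _
    cases hx : x.2 <;> simp [fD, inv_sr]
  have hvpos : 0 < v.length := List.length_pos_iff.mpr hvne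
  have hchain : w.Chain' (· ≠ ·) := by
    unfold List.Chain'
    rw [List.isChain_iff_getElem]
    intro i hi
    have hi1 : i + 1 < v.length := by omega
    have := hvalt ⟨i, by omega⟩
    have hmod : (i + 1) % v.length = i + 1 := Nat.mod_eq_of_lt hi1
    simp only [hmod] at this
    simpa [hwdef, List.getElem_map] using this
  rcases Nat.even_or_odd v.length with ⟨l, hl⟩ | ⟨l, hl⟩
  · -- even case
    have hlpos : 1 ≤ l := by omega
    have hwne : w ≠ [] := by simp [hwdef, hvne]
    obtain ⟨c, t, hct⟩ := List.exists_cons_of_ne_nil hwne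
    have hhd : w = [] ∨ w.head? = some c := Or.inr (by rw [hct]; rfl)
    have := prod_even (p := p) l w c hchain (by omega) hhd
    rw [hprod, one_def] at this
    have h0 : eps c * (l : ZMod p) = 0 := (DihedralGroup.r.inj this).symm
    have hl0 : (l : ZMod p) = 0 := by
      by_cases hc : c = 0
      · simpa [eps, hc] using h0
      · rw [eps, if_neg hc, neg_mul, neg_eq_zero, one_mul] at h0
        exact h0
    haveI : NeZero p := ⟨by omega⟩
    have hdvd : p ∣ l := (ZMod.natCast_eq_zero_iff l p).mp hl0
    have := Nat.le_of_dvd (by omega) hdvd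
    omega
  · -- odd case: impossible
    obtain ⟨j, hj⟩ := prod_odd (p := p) l w hchain (by omega)
    rw [hprod, one_def] at hj
    exact absurd hj (by intro h; cases h)

end Heckoid
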